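/- For 0 < r < 1, the operator h₂ := ∂ρ/∂θ − (1/2)(ρL₂ + L₂ρ) equals ((6r − 4r³ + 3(1-r²)·log((1-r)/(1+r)))/(8r²)) · [[sinθ, -cosθ·e^{-iφ}],[-cosθ·e^{iφ}, -sinθ]]. -/

import Mathlib

open Real Matrix

noncomputable def rho (r θ φ : ℝ) : Matrix (Fin 2) (Fin 2) ℂ :=
  (1 / 2 : ℂ) •
    !![(1 + r * Real.cos θ : ℂ), r * Complex.exp (-Complex.I * φ) * Real.sin θ;
       r * Complex.exp (Complex.I * φ) * Real.sin θ, (1 - r * Real.cos θ : ℂ)]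

noncomputable def L2 (r θ φ : ℝ) : Matrix (Fin 2) (Fin 2) ℂ :=
  ((3 / (4 * r ^ 2) * (2 * r + (1 - r ^ 2) * Real.log ((1 - r) / (1 + r))) : ℝ) : ℂ) •
    !![(-Real.sin θ : ℂ), Complex.exp (-Complex.I * φ) * Real.cos θ;
       Complex.exp (Complex.I * φ) * Real.cos θ, (Real.sin θ : ℂ)]

/-- Entrywise derivative of `ρ` with respect to `θ`. -/
noncomputable def dRhodTheta (r θ φ : ℝ) : Matrix (Fin 2) (Fin 2) ℂ :=
  Matrix.of fun i j => deriv (fun θ' => rho r θ' φ i j) θ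

lemma cosC (θ : ℝ) : HasDerivAt (fun θ' : ℝ => (Real.cos θ' : ℂ)) (-Real.sin θ : ℂ) θ := by
  exact_mod_cast (Real.hasDerivAt_cos θ).ofReal_comp

lemma sinC (θ : ℝ) : HasDerivAt (fun θ' : ℝ => (Real.sin θ' : ℂ)) (Real.cos θ : ℂ) θ :=
  (Real.hasDerivAt_sin θ).ofReal_comp

lemma dRho (r θ φ : ℝ) : dRhodTheta r θ φ =
    (1 / 2 : ℂ) •
    !![(-(r * Real.sin θ) : ℂ), r * Complex.exp (-Complex.I * φ) * Real.cos θ;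
       r * Complex.exp (Complex.I * φ) * Real.cos θ, (r * Real.sin θ : ℂ)] := by
  ext i j
  fin_cases i <;> fin_cases j <;>
    simp only [dRhodTheta, rho, Matrix.of_apply, Matrix.smul_apply, Fin.mk_zero, Fin.mk_one,
      Fin.isValue, Matrix.cons_val', Matrix.cons_val_zero, Matrix.cons_val_one, Matrix.head_cons,
      Matrix.head_fin_const, Matrix.empty_val', Matrix.cons_val_fin_one, smul_eq_mul]
  · have h : HasDerivAt (fun θ' : ℝ => (1/2 : ℂ) * (1 + ↑r * ↑(Real.cos θ')))
        ((1/2 : ℂ) * -(↑r * ↑(Real.sin θ))) θ := by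
      have := (((cosC θ).const_mul (r : ℂ)).const_add 1).const_mul (1/2 : ℂ)
      exact this.congr_deriv (by ring)
    rw [h.deriv]
  · have h : HasDerivAt (fun θ' : ℝ => (1/2 : ℂ) * (↑r * Complex.exp (-Complex.I * ↑φ) * ↑(Real.sin θ')))
        ((1/2 : ℂ) * (↑r * Complex.exp (-Complex.I * ↑φ) * ↑(Real.cos θ))) θ := by
      have := ((sinC θ).const_mul ((r : ℂ) * Complex.exp (-Complex.I * φ))).const_mul (1/2 : ℂ)
      convert this using 1
    rw [h.deriv]
  · have h : HasDerivAt (fun θ' : ℝ => (1/2 : ℂ) * (↑r * Complex.exp (Complex.I * ↑φ) * ↑(Real.sin θ')))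
        ((1/2 : ℂ) * (↑r * Complex.exp (Complex.I * ↑φ) * ↑(Real.cos θ))) θ := by
      have := ((sinC θ).const_mul ((r : ℂ) * Complex.exp (Complex.I * φ))).const_mul (1/2 : ℂ)
      convert this using 1
    rw [h.deriv]
  · have h : HasDerivAt (fun θ' : ℝ => (1/2 : ℂ) * (1 - ↑r * ↑(Real.cos θ')))
        ((1/2 : ℂ) * (↑r * ↑(Real.sin θ))) θ := by
      have := (((cosC θ).const_mul (r : ℂ)).const_sub 1).const_mul (1/2 : ℂ)
      exact this.congr_deriv (by ring)
    rw [h.deriv]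

set_option maxHeartbeats 1000000 in
theorem h2_formula (r θ φ : ℝ) (hr : 0 < r) (hr1 : r < 1) :
    dRhodTheta r θ φ - (1 / 2 : ℂ) • (rho r θ φ * L2 r θ φ + L2 r θ φ * rho r θ φ) =
      (((6 * r - 4 * r ^ 3 + 3 * (1 - r ^ 2) * Real.log ((1 - r) / (1 + r))) / (8 * r ^ 2) : ℝ) : ℂ) •
        !![(Real.sin θ : ℂ), -Real.cos θ * Complex.exp (-Complex.I * φ);
           -Real.cos θ * Complex.exp (Complex.I * φ), (-Real.sin θ : ℂ)] := by
  rw [dRho]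
  have hab : Complex.exp (-Complex.I * φ) * Complex.exp (Complex.I * φ) = 1 := by
    rw [← Complex.exp_add]
    norm_num
  have hr0 : r ≠ 0 := hr.ne'
  have hkR : (6 * r - 4 * r ^ 3 + 3 * (1 - r ^ 2) * Real.log ((1 - r) / (1 + r))) / (8 * r ^ 2)
      = (3 / (4 * r ^ 2) * (2 * r + (1 - r ^ 2) * Real.log ((1 - r) / (1 + r)))) / 2 - r / 2 := by
    field_simp
    ring
  rw [hkR]
  ext i j
  fin_cases i <;> fin_cases j <;>
    simp only [rho, L2, Matrix.of_apply, Matrix.sub_apply, Matrix.add_apply, Matrix.smul_apply,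
      Matrix.mul_apply, Fin.sum_univ_two, Fin.mk_zero, Fin.mk_one, Fin.isValue,
      Matrix.cons_val', Matrix.cons_val_zero, Matrix.cons_val_one, Matrix.head_cons,
      Matrix.head_fin_const, Matrix.empty_val', Matrix.cons_val_fin_one, smul_eq_mul] <;>
    push_cast
  · linear_combination (-((3 / (4 * (r:ℂ) ^ 2) * (2 * (r:ℂ) + (1 - (r:ℂ) ^ 2) *
      (Real.log ((1 - r) / (1 + r)) : ℂ))) / 2) * (r:ℂ) * Complex.sin θ * Complex.cos θ) * hab
  · ring
  · ring
  · linear_combination (-((3 / (4 * (r:ℂ) ^ 2) * (2 * (r:ℂ) + (1 - (r:ℂ) ^ 2) *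
      (Real.log ((1 - r) / (1 + r)) : ℂ))) / 2) * (r:ℂ) * Complex.sin θ * Complex.cos θ) * hab
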